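/- For N ≥ 2 and τ ∈ [0,1], substituting the original schedule s(τ) = (1/2)[1 + tan((2τ-1)·arctan(sqrt(N-1)))/sqrt(N-1)] into q(s) = (1/2)[1 + (1 - 2((N-1)/N)(1-s))/sqrt(1 - 4((N-1)/N)s(1-s))] gives q = cos²((1-τ)·arccos(1/sqrt(N))). -/

import Mathlib

theorem stmt_12 (N : ℝ) (hN : N ≥ 2) (τ : ℝ) (hτ : τ ∈ Set.Icc (0:ℝ) 1) :
    (fun s : ℝ => (1/2) * (1 + (1 - 2*((N-1)/N)*(1-s)) / Real.sqrt (1 - 4*((N-1)/N)*s*(1-s))))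
      ((1/2) * (1 + Real.tan ((2*τ-1) * Real.arctan (Real.sqrt (N-1))) / Real.sqrt (N-1)))
    = Real.cos ((1-τ) * Real.arccos (1 / Real.sqrt N)) ^ 2 := by
  obtain ⟨hτ0, hτ1⟩ := hτ
  have hN0 : (0:ℝ) < N := by linarith
  have hN1 : (0:ℝ) < N - 1 := by linarith
  set x := Real.sqrt (N-1) with hxdef
  have hx0 : 0 < x := Real.sqrt_pos.mpr hN1
  have hx2 : x^2 = N - 1 := Real.sq_sqrt hN1.le
  set a := Real.arctan x with hadef
  have ha0 : 0 ≤ a := by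
    rw [hadef, ← Real.arctan_zero]
    exact Real.arctan_strictMono.monotone hx0.le
  have haπ : a < Real.pi/2 := Real.arctan_lt_pi_div_two x
  have h1x : 1 + x^2 = N := by rw [hx2]; ring
  have hca : Real.cos a = 1 / Real.sqrt N := by
    rw [hadef, Real.cos_arctan, h1x]
  have hsa : Real.sin a = x / Real.sqrt N := by
    rw [hadef, Real.sin_arctan, h1x]
  set θ := (2*τ-1) * a with hθdef
  have hθbound : |θ| ≤ a := by
    rw [hθdef, abs_mul]
    have h1 : |2*τ-1| ≤ 1 := abs_le.mpr ⟨by linarith, by linarith⟩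
    calc |2*τ-1| * |a| ≤ 1 * |a| := by gcongr
    _ = a := by rw [one_mul, abs_of_nonneg ha0]
  have hθb := abs_le.mp hθbound
  have hcθ : 0 < Real.cos θ := by
    apply Real.cos_pos_of_mem_Ioo
    constructor
    · linarith [hθb.1]
    · exact lt_of_le_of_lt hθb.2 haπ
  have hsN : 0 < Real.sqrt N := Real.sqrt_pos.mpr hN0
  have hNval : Real.sqrt N ^ 2 = N := Real.sq_sqrt hN0.le
  have htan : Real.tan θ = Real.sin θ / Real.cos θ := Real.tan_eq_sin_div_cos θ
  have hpyth : Real.sin θ ^ 2 + Real.cos θ ^ 2 = 1 := Real.sin_sq_add_cos_sq θ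
  simp only []
  have hinner : 1 - 4*((N-1)/N)*((1/2) * (1 + Real.tan θ / x))*(1-(1/2) * (1 + Real.tan θ / x))
      = 1/(N * Real.cos θ^2) := by
    rw [htan]
    field_simp
    linear_combination (4*x^2) * hpyth - (4*Real.sin θ^2) * hx2
  rw [hinner]
  have hsqrt : Real.sqrt (1/(N * Real.cos θ^2)) = 1/(Real.sqrt N * Real.cos θ) := by
    rw [one_div, Real.sqrt_inv, Real.sqrt_mul hN0.le, Real.sqrt_sq hcθ.le, one_div]
  rw [hsqrt]
  have harc : Real.arccos (1 / Real.sqrt N) = a := by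
    rw [← hca, Real.arccos_cos ha0 (le_of_lt (lt_of_lt_of_le haπ (by linarith [Real.pi_pos])))]
  rw [harc, Real.cos_sq]
  have h2 : 2 * ((1-τ)*a) = a - θ := by rw [hθdef]; ring
  rw [h2, Real.cos_sub, hca, hsa, htan]
  field_simp
  linear_combination (Real.cos θ*x + (N-1)*Real.sin θ) * hNval - (N*Real.sin θ) * hx2
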